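/- Let ρ < −1 and let g : [X,∞) → (0,∞) (X > 0) be regularly varying at ∞ of index ρ and locally bounded on [X,∞). Then: (i) ∫_x^∞ g(u) du ~ −(ρ+1)⁻¹ · x·g(x) as x → ∞; (ii) for every t > 0, (∫_{tx}^∞ g(u) du) / (∫_x^∞ g(u) du) → t^{ρ+1} as x → ∞; (iii) ∑_{j=k}^∞ g(j) ~ −(ρ+1)⁻¹ · k·g(k) as k → ∞ through the integers k ≥ X. -/

import Mathlib

open Filter MeasureTheory Metric Set Topology

noncomputable section

namespace Karamata8

/-- centered log-ratio -/
def A (ρ : ℝ) (G : ℝ → ℝ) (x s : ℝ) : ℝ :=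
  Real.log (G (x * Real.exp s)) - Real.log (G x) - ρ * s

lemma A_add (ρ : ℝ) (G : ℝ → ℝ) (x a b : ℝ) :
    A ρ G x (a + b) = A ρ G x a + A ρ G (x * Real.exp a) b := by
  simp only [A, Real.exp_add, ← mul_assoc]
  ring

lemma A_meas {G : ℝ → ℝ} (hm : Measurable G) (ρ y : ℝ) :
    Measurable (fun u => A ρ G y u) := by
  apply Measurable.sub
  · exact (Real.measurable_log.comp (hm.comp (Real.measurable_exp.const_mul y))).sub
      measurable_const
  · exact measurable_const.mul measurable_id

lemma A_tendsto {ρ X : ℝ} {G : ℝ → ℝ} (hX : 0 < X)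
    (hpos : ∀ x, X ≤ x → 0 < G x)
    (hrv : ∀ t : ℝ, 0 < t → Tendsto (fun x => G (t * x) / G x) atTop (𝓝 (t ^ ρ)))
    (s : ℝ) : Tendsto (fun x => A ρ G x s) atTop (𝓝 0) := by
  have h1 := hrv (Real.exp s) (Real.exp_pos s)
  have hne : (Real.exp s) ^ ρ ≠ 0 := by positivity
  have h2 : Tendsto (fun x => Real.log (G (Real.exp s * x) / G x)) atTop
      (𝓝 (ρ * s)) := by
    have := (Real.continuousAt_log hne).tendsto.comp h1
    simpa [Function.comp_def, Real.log_rpow (Real.exp_pos s), Real.log_exp, mul_comm]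
      using this
  have h3 : ∀ᶠ x in atTop,
      Real.log (G (Real.exp s * x) / G x) - ρ * s = A ρ G x s := by
    filter_upwards [eventually_ge_atTop X, eventually_ge_atTop (X / Real.exp s)]
      with x hx hx'
    have hgx : 0 < G x := hpos x hx
    have hxe : X ≤ Real.exp s * x := by
      rw [div_le_iff₀ (Real.exp_pos s)] at hx'
      linarith [hx'.trans_eq (mul_comm x (Real.exp s))]
    have hge : 0 < G (Real.exp s * x) := hpos _ hxe
    rw [Real.log_div hge.ne' hgx.ne']
    simp [A, mul_comm]
  have := (h2.sub_const (ρ * s))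
  rw [sub_self] at this
  exact this.congr' h3

/-- the bad set -/
def Bad (ρ : ℝ) (G : ℝ → ℝ) (δ y : ℝ) : Set ℝ :=
  {u ∈ Icc (0:ℝ) 3 | δ ≤ |A ρ G y u|}

lemma Bad_meas {G : ℝ → ℝ} (hm : Measurable G) (ρ δ y : ℝ) :
    MeasurableSet (Bad ρ G δ y) :=
  measurableSet_Icc.inter (measurableSet_le measurable_const (A_meas hm ρ y).abs)

lemma Bad_small {ρ X : ℝ} {G : ℝ → ℝ} (hX : 0 < X)
    (hm : Measurable G)
    (hpos : ∀ x, X ≤ x → 0 < G x)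
    (hrv : ∀ t : ℝ, 0 < t → Tendsto (fun x => G (t * x) / G x) atTop (𝓝 (t ^ ρ)))
    {δ : ℝ} (hδ : 0 < δ) :
    ∀ᶠ y in atTop, volume (Bad ρ G δ y) < ENNReal.ofReal (1/2) := by
  set ψ : ℝ → ℝ → ℝ := fun y u => min 1 (δ⁻¹ * |A ρ G y u|) with hψ
  have hψ0 : ∀ y u, 0 ≤ ψ y u := fun y u => le_min zero_le_one (by positivity)
  have hψ1 : ∀ y u, ψ y u ≤ 1 := fun y u => min_le_left _ _
  have hint : Tendsto (fun y => ∫ u in Icc (0:ℝ) 3, ψ y u) atTop (𝓝 0) := by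
    have key : Tendsto (fun y => ∫ u in Icc (0:ℝ) 3, ψ y u) atTop
        (𝓝 (∫ u in Icc (0:ℝ) 3, (0:ℝ))) := by
      apply tendsto_integral_filter_of_dominated_convergence (fun _ => (1:ℝ))
      · filter_upwards with y
        exact ((measurable_const.min (((A_meas hm ρ y).abs).const_mul δ⁻¹))).aestronglyMeasurable
      · filter_upwards with y
        filter_upwards with u
        rw [Real.norm_eq_abs, abs_of_nonneg (hψ0 y u)]
        exact hψ1 y u
      · exact MeasureTheory.integrableOn_const
          (by rw [Real.volume_Icc]; exact ENNReal.ofReal_ne_top)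
      · filter_upwards with u
        have hA := A_tendsto hX hpos hrv u
        have : Tendsto (fun y => δ⁻¹ * |A ρ G y u|) atTop (𝓝 (δ⁻¹ * |(0:ℝ)|)) :=
          (hA.abs).const_mul _
        simp only [abs_zero, mul_zero] at this
        have hmin := tendsto_const_nhds.min this (f := fun y : ℝ => (1:ℝ))
        simpa [min_eq_right (le_refl (0:ℝ)), min_eq_right zero_le_one] using hmin
    simpa using key
  have hev : ∀ᶠ y in atTop, ∫ u in Icc (0:ℝ) 3, ψ y u < 1/4 := by
    have := hint.eventually (eventually_lt_nhds (show (0:ℝ) < 1/4 by norm_num))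
    simpa using this
  filter_upwards [hev] with y hy
  have hBsub : Bad ρ G δ y ⊆ Icc (0:ℝ) 3 := sep_subset _ _
  have hBfin : volume (Bad ρ G δ y) ≠ ⊤ := by
    refine ne_top_of_le_ne_top ?_ (measure_mono hBsub)
    rw [Real.volume_Icc]; exact ENNReal.ofReal_ne_top
  have hBm := Bad_meas hm ρ δ y
  -- indicator integral ≤ ψ-integral
  have hψint : IntegrableOn (ψ y) (Icc (0:ℝ) 3) volume := by
    apply Integrable.mono' (g := fun _ => (1:ℝ))
    · exact MeasureTheory.integrableOn_const
        (by rw [Real.volume_Icc]; exact ENNReal.ofReal_ne_top)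
    · exact ((measurable_const.min (((A_meas hm ρ y).abs).const_mul δ⁻¹))).aestronglyMeasurable
    · filter_upwards with u
      rw [Real.norm_eq_abs, abs_of_nonneg (hψ0 y u)]
      exact hψ1 y u
  have hind : (volume (Bad ρ G δ y)).toReal ≤ ∫ u in Icc (0:ℝ) 3, ψ y u := by
    have h1 : ∫ u in Icc (0:ℝ) 3, (Bad ρ G δ y).indicator (fun _ => (1:ℝ)) u
        = (volume (Bad ρ G δ y)).toReal := by
      rw [MeasureTheory.setIntegral_indicator hBm,
        inter_eq_self_of_subset_right hBsub]
      simp [MeasureTheory.setIntegral_const, measureReal_def]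
    rw [← h1]
    apply MeasureTheory.setIntegral_mono_on
    · exact (MeasureTheory.integrableOn_const
        (by rw [Real.volume_Icc]; exact ENNReal.ofReal_ne_top)).indicator hBm
    · exact hψint
    · exact measurableSet_Icc
    · intro u hu
      by_cases hub : u ∈ Bad ρ G δ y
      · rw [Set.indicator_of_mem hub]
        refine le_min le_rfl ?_
        calc (1:ℝ) = δ⁻¹ * δ := (inv_mul_cancel₀ hδ.ne').symm
          _ ≤ δ⁻¹ * |A ρ G y u| :=
              mul_le_mul_of_nonneg_left hub.2 (by positivity)
      · rw [Set.indicator_of_notMem hub]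
        exact hψ0 y u
  have : (volume (Bad ρ G δ y)).toReal < 1/2 := lt_of_le_of_lt hind (by linarith)
  rwa [← ENNReal.lt_ofReal_iff_toReal_lt hBfin] at this

lemma uct {ρ X : ℝ} {G : ℝ → ℝ} (hX : 0 < X)
    (hm : Measurable G)
    (hpos : ∀ x, X ≤ x → 0 < G x)
    (hrv : ∀ t : ℝ, 0 < t → Tendsto (fun x => G (t * x) / G x) atTop (𝓝 (t ^ ρ)))
    {ε : ℝ} (hε : 0 < ε) :
    ∀ᶠ x in atTop, ∀ s ∈ Icc (0:ℝ) 1, |A ρ G x s| < ε := by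
  have hδ : 0 < ε / 2 := by linarith
  obtain ⟨Y, hY⟩ := (Bad_small hX hm hpos hrv hδ).exists_forall_of_atTop
  filter_upwards [eventually_ge_atTop Y, eventually_gt_atTop 0] with x hxY hx0
  intro s hs
  have hes : (1:ℝ) ≤ Real.exp s := Real.one_le_exp hs.1
  have hxe : Y ≤ x * Real.exp s := by nlinarith
  have hb1 : volume (Bad ρ G (ε/2) x) < ENNReal.ofReal (1/2) := hY x hxY
  have hb2 : volume (Bad ρ G (ε/2) (x * Real.exp s)) < ENNReal.ofReal (1/2) :=
    hY _ hxe
  have hmain : ¬ (Icc s 3 ⊆ Bad ρ G (ε/2) x ∪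
      ((· + (-s)) ⁻¹' Bad ρ G (ε/2) (x * Real.exp s))) := by
    intro hsub
    have h1 : volume (Icc s 3) ≤ volume (Bad ρ G (ε/2) x) +
        volume ((· + (-s)) ⁻¹' Bad ρ G (ε/2) (x * Real.exp s)) :=
      (measure_mono hsub).trans (measure_union_le _ _)
    rw [measure_preimage_add_right] at h1
    have h2 : volume (Icc s 3) < ENNReal.ofReal (1/2) + ENNReal.ofReal (1/2) :=
      h1.trans_lt (ENNReal.add_lt_add hb1 hb2)
    rw [Real.volume_Icc, ← ENNReal.ofReal_add (by norm_num) (by norm_num)] at h2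
    have h3 : (3:ℝ) - s ≤ 1/2 + 1/2 := by
      have := (ENNReal.ofReal_lt_ofReal_iff (by norm_num)).1 h2
      linarith
    linarith [hs.2]
  rw [Set.not_subset] at hmain
  obtain ⟨u, hu, hnot⟩ := hmain
  rw [Set.mem_union, not_or] at hnot
  obtain ⟨hn1, hn2⟩ := hnot
  have hu03 : u ∈ Icc (0:ℝ) 3 := ⟨hs.1.trans hu.1, hu.2⟩
  have hus03 : u - s ∈ Icc (0:ℝ) 3 := ⟨by linarith [hu.1], by linarith [hu.2, hs.1]⟩
  have h1 : |A ρ G x u| < ε/2 := by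
    by_contra h
    exact hn1 ⟨hu03, not_lt.1 h⟩
  have h2 : |A ρ G (x * Real.exp s) (u - s)| < ε/2 := by
    by_contra h
    refine hn2 ?_
    simp only [Set.mem_preimage]
    have : u + -s = u - s := by ring
    rw [this]
    exact ⟨hus03, not_lt.1 h⟩
  have key : A ρ G x u = A ρ G x s + A ρ G (x * Real.exp s) (u - s) := by
    have := A_add ρ G x s (u - s)
    rw [show s + (u - s) = u by ring] at this
    exact this
  have : A ρ G x s = A ρ G x u - A ρ G (x * Real.exp s) (u - s) := by linarith
  rw [this]
  calc |A ρ G x u - A ρ G (x * Real.exp s) (u - s)|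
      ≤ |A ρ G x u| + |A ρ G (x * Real.exp s) (u - s)| := abs_sub _ _
    _ < ε/2 + ε/2 := add_lt_add h1 h2
    _ = ε := by ring

lemma potter {ρ X : ℝ} {G : ℝ → ℝ} (hX : 0 < X)
    (hm : Measurable G)
    (hpos : ∀ x, X ≤ x → 0 < G x)
    (hrv : ∀ t : ℝ, 0 < t → Tendsto (fun x => G (t * x) / G x) atTop (𝓝 (t ^ ρ)))
    {ε : ℝ} (hε : 0 < ε) :
    ∃ Y : ℝ, X ≤ Y ∧ ∀ x, Y ≤ x → ∀ s, 0 ≤ s → |A ρ G x s| ≤ ε * (s + 1) := by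
  obtain ⟨Y₀, hY₀⟩ := (uct hX hm hpos hrv hε).exists_forall_of_atTop
  refine ⟨max X Y₀, le_max_left _ _, ?_⟩
  set Y := max X Y₀ with hY
  have hYpos : 0 < Y := lt_of_lt_of_le hX (le_max_left _ _)
  have haux : ∀ n : ℕ, ∀ x : ℝ, Y ≤ x → ∀ s : ℝ, 0 ≤ s → s ≤ (n : ℝ) + 1 →
      |A ρ G x s| ≤ ε * ((n : ℝ) + 1) := by
    intro n
    induction n with
    | zero =>
      intro x hx s hs0 hs1
      have h := hY₀ x (le_trans (le_max_right _ _) hx) s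
        ⟨hs0, by simpa using hs1⟩
      simpa using h.le
    | succ n ih =>
      intro x hx s hs0 hsn
      by_cases hcase : s ≤ (n : ℝ) + 1
      · refine (ih x hx s hs0 hcase).trans ?_
        have h1 : ((n : ℝ) + 1) ≤ ((n : ℝ) + 1 + 1) := by linarith
        have h2 : (((n : ℕ) + 1 : ℕ) : ℝ) + 1 = (n : ℝ) + 1 + 1 := by push_cast; ring
        rw [h2]
        exact mul_le_mul_of_nonneg_left h1 hε.le
      · push_neg at hcase
        have hkey : A ρ G x s = A ρ G x 1 + A ρ G (x * Real.exp 1) (s - 1) := by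
          have h := A_add ρ G x 1 (s - 1)
          rw [show (1:ℝ) + (s - 1) = s by ring] at h
          exact h
        have h1 : |A ρ G x 1| ≤ ε :=
          (hY₀ x (le_trans (le_max_right _ _) hx) 1 ⟨zero_le_one, le_rfl⟩).le
        have hxe : Y ≤ x * Real.exp 1 := by
          have he : (1:ℝ) ≤ Real.exp 1 := Real.one_le_exp zero_le_one
          nlinarith
        have hsn' : s - 1 ≤ (n : ℝ) + 1 := by
          have : s ≤ ((n : ℕ) + 1 : ℕ) + 1 := hsn
          push_cast at this
          linarith
        have h2 : |A ρ G (x * Real.exp 1) (s - 1)| ≤ ε * ((n : ℝ) + 1) :=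
          ih _ hxe (s - 1) (by linarith) hsn'
        have h3 : |A ρ G x s| ≤ ε + ε * ((n : ℝ) + 1) := by
          rw [hkey]
          exact (abs_add_le _ _).trans (add_le_add h1 h2)
        refine h3.trans_eq ?_
        push_cast
        ring
  intro x hx s hs0
  have hfl : s ≤ (⌊s⌋₊ : ℝ) + 1 := (Nat.lt_floor_add_one s).le
  refine (haux ⌊s⌋₊ x hx s hs0 hfl).trans ?_
  have h4 : (⌊s⌋₊ : ℝ) ≤ s := Nat.floor_le hs0
  have : (⌊s⌋₊ : ℝ) + 1 ≤ s + 1 := by linarith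
  exact mul_le_mul_of_nonneg_left this hε.le

lemma potter_mul {ρ X : ℝ} {G : ℝ → ℝ} (hX : 0 < X)
    (hm : Measurable G)
    (hpos : ∀ x, X ≤ x → 0 < G x)
    (hrv : ∀ t : ℝ, 0 < t → Tendsto (fun x => G (t * x) / G x) atTop (𝓝 (t ^ ρ)))
    {ε : ℝ} (hε : 0 < ε) :
    ∃ Y : ℝ, X ≤ Y ∧ ∀ x, Y ≤ x → ∀ t, 1 ≤ t →
      G (x * t) ≤ Real.exp ε * G x * t ^ (ρ + ε) := by
  obtain ⟨Y, hYX, hY⟩ := potter hX hm hpos hrv hε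
  refine ⟨Y, hYX, ?_⟩
  intro x hx t ht
  have hxX : X ≤ x := le_trans hYX hx
  have hxpos : 0 < x := lt_of_lt_of_le hX hxX
  have htpos : 0 < t := lt_of_lt_of_le one_pos ht
  have hs0 : 0 ≤ Real.log t := Real.log_nonneg ht
  have hA := hY x hx (Real.log t) hs0
  have hexp : x * Real.exp (Real.log t) = x * t := by rw [Real.exp_log htpos]
  have hGxt : 0 < G (x * t) := hpos _ (le_trans hxX (by nlinarith))
  have hGx : 0 < G x := hpos x hxX
  have hlog : Real.log (G (x * t)) ≤ Real.log (G x) + ρ * Real.log t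
      + ε * (Real.log t + 1) := by
    have := (abs_le.1 hA).2
    rw [A, hexp] at this
    linarith
  have := Real.exp_le_exp.2 hlog
  rw [Real.exp_log hGxt] at this
  refine this.trans_eq ?_
  rw [Real.rpow_def_of_pos htpos,
    show Real.log (G x) + ρ * Real.log t + ε * (Real.log t + 1)
      = ε + (Real.log (G x) + (ρ + ε) * Real.log t) by ring,
    Real.exp_add, Real.exp_add, Real.exp_log hGx]
  ring

lemma integrable_tail {ρ X : ℝ} {G : ℝ → ℝ} (hρ : ρ < -1) (hX : 0 < X)
    (hm : Measurable G)
    (hpos : ∀ x, X ≤ x → 0 < G x)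
    (hrv : ∀ t : ℝ, 0 < t → Tendsto (fun x => G (t * x) / G x) atTop (𝓝 (t ^ ρ))) :
    ∃ Y : ℝ, X ≤ Y ∧ ∀ x, Y ≤ x → IntegrableOn G (Ioi x) volume := by
  set ε₀ : ℝ := (-1 - ρ) / 2 with hε₀def
  have hε₀ : 0 < ε₀ := by rw [hε₀def]; linarith
  have hp : ρ + ε₀ < -1 := by rw [hε₀def]; linarith
  obtain ⟨Y, hYX, hY⟩ := potter_mul hX hm hpos hrv hε₀
  refine ⟨Y, hYX, ?_⟩
  intro x hx
  have hxpos : 0 < x := lt_of_lt_of_le hX (le_trans hYX hx)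
  set C : ℝ := Real.exp ε₀ * G x / x ^ (ρ + ε₀) with hC
  apply Integrable.mono' (g := fun u => C * u ^ (ρ + ε₀))
  · exact (integrableOn_Ioi_rpow_of_lt hp hxpos).const_mul C
  · exact hm.aestronglyMeasurable
  · rw [ae_restrict_iff' measurableSet_Ioi]
    filter_upwards with u hu
    have hux : x < u := hu
    have hu1 : 1 ≤ u / x := (one_le_div hxpos).2 hux.le
    have hupos : 0 < u := lt_trans hxpos hux
    have huX : X ≤ u := le_trans (le_trans hYX hx) hux.le
    have heq : x * (u / x) = u := by field_simp
    have hb := hY x hx (u / x) hu1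
    rw [heq] at hb
    have hdiv : (u / x) ^ (ρ + ε₀) = u ^ (ρ + ε₀) / x ^ (ρ + ε₀) :=
      Real.div_rpow hupos.le hxpos.le _
    rw [Real.norm_eq_abs, abs_of_pos (hpos u huX)]
    calc G u ≤ Real.exp ε₀ * G x * ((u / x) ^ (ρ + ε₀)) := hb
      _ = C * u ^ (ρ + ε₀) := by
          rw [hdiv, hC]
          field_simp

lemma lim_main {ρ X : ℝ} {G : ℝ → ℝ} (hρ : ρ < -1) (hX : 0 < X)
    (hm : Measurable G)
    (hpos : ∀ x, X ≤ x → 0 < G x)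
    (hrv : ∀ t : ℝ, 0 < t → Tendsto (fun x => G (t * x) / G x) atTop (𝓝 (t ^ ρ))) :
    Tendsto (fun x => (∫ u in Ioi x, G u) / (x * G x)) atTop (𝓝 (-(ρ + 1)⁻¹)) := by
  set ε₀ : ℝ := (-1 - ρ) / 2 with hε₀def
  have hε₀ : 0 < ε₀ := by rw [hε₀def]; linarith
  have hp : ρ + ε₀ < -1 := by rw [hε₀def]; linarith
  obtain ⟨Y, hYX, hY⟩ := potter_mul hX hm hpos hrv hε₀
  have hlim : Tendsto (fun x => ∫ u in Ioi (1:ℝ), G (x * u) / G x) atTop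
      (𝓝 (∫ u in Ioi (1:ℝ), u ^ ρ)) := by
    apply tendsto_integral_filter_of_dominated_convergence
      (fun u => Real.exp ε₀ * u ^ (ρ + ε₀))
    · filter_upwards with x
      exact ((hm.comp (measurable_id.const_mul x)).div_const _).aestronglyMeasurable
    · filter_upwards [eventually_ge_atTop Y] with x hx
      rw [ae_restrict_iff' measurableSet_Ioi]
      filter_upwards with u hu
      have hu1 : (1:ℝ) < u := hu
      have hxpos : 0 < x := lt_of_lt_of_le hX (le_trans hYX hx)
      have hGx : 0 < G x := hpos x (le_trans hYX hx)
      have hb := hY x hx u hu1.le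
      have hGxu : 0 < G (x * u) :=
        hpos _ (le_trans (le_trans hYX hx) (by nlinarith))
      rw [Real.norm_eq_abs, abs_of_pos (div_pos hGxu hGx), div_le_iff₀ hGx]
      calc G (x * u) ≤ Real.exp ε₀ * G x * u ^ (ρ + ε₀) := hb
        _ = Real.exp ε₀ * u ^ (ρ + ε₀) * G x := by ring
    · exact (integrableOn_Ioi_rpow_of_lt hp one_pos).const_mul _
    · rw [ae_restrict_iff' measurableSet_Ioi]
      filter_upwards with u hu
      have hu1 : (1:ℝ) < u := hu
      have := hrv u (lt_trans one_pos hu1)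
      exact this.congr (fun x => by rw [mul_comm])
  have hval : ∫ u in Ioi (1:ℝ), u ^ ρ = -(ρ + 1)⁻¹ := by
    rw [integral_Ioi_rpow_of_lt hρ one_pos]
    rw [Real.one_rpow]
    field_simp
  rw [hval] at hlim
  refine hlim.congr' ?_
  filter_upwards [eventually_ge_atTop Y, eventually_ge_atTop 1] with x hx hx1
  have hxpos : 0 < x := lt_of_lt_of_le one_pos hx1
  have hGx : 0 < G x := hpos x (le_trans hYX hx)
  have hcv : ∫ u in Ioi (1:ℝ), G (x * u) = x⁻¹ • ∫ u in Ioi (x * 1), G u :=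
    integral_comp_mul_left_Ioi G 1 hxpos
  rw [MeasureTheory.integral_div, hcv]
  rw [mul_one, smul_eq_mul]
  field_simp

lemma c_pos {ρ : ℝ} (hρ : ρ < -1) : 0 < -(ρ + 1)⁻¹ := by
  rw [neg_pos]
  exact inv_lt_zero.2 (by linarith)

lemma tail_pos {ρ X : ℝ} {G : ℝ → ℝ} (hρ : ρ < -1) (hX : 0 < X)
    (hpos : ∀ x, X ≤ x → 0 < G x)
    {x : ℝ} (hx : X ≤ x) (hint : IntegrableOn G (Ioi x) volume) :
    0 < ∫ u in Ioi x, G u := by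
  rw [MeasureTheory.setIntegral_pos_iff_support_of_nonneg_ae]
  · have hsub : Ioi x ⊆ Function.support G ∩ Ioi x := by
      intro u hu
      exact ⟨Function.mem_support.2 (hpos u (le_trans hx (le_of_lt hu))).ne', hu⟩
    refine lt_of_lt_of_le ?_ (measure_mono hsub)
    rw [Real.volume_Ioi]
    simp
  · rw [EventuallyLE, ae_restrict_iff' measurableSet_Ioi]
    filter_upwards with u hu
    exact (hpos u (le_trans hx (le_of_lt hu))).le
  · exact hint

lemma lim_i {ρ X : ℝ} {G : ℝ → ℝ} (hρ : ρ < -1) (hX : 0 < X)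
    (hm : Measurable G)
    (hpos : ∀ x, X ≤ x → 0 < G x)
    (hrv : ∀ t : ℝ, 0 < t → Tendsto (fun x => G (t * x) / G x) atTop (𝓝 (t ^ ρ))) :
    Tendsto (fun x => (∫ u in Ioi x, G u) / (-(ρ + 1)⁻¹ * (x * G x))) atTop (𝓝 1) := by
  have hc : (-(ρ + 1)⁻¹ : ℝ) ≠ 0 := (c_pos hρ).ne'
  have heq : ∀ x : ℝ, (∫ u in Ioi x, G u) / (-(ρ + 1)⁻¹ * (x * G x))
      = ((∫ u in Ioi x, G u) / (x * G x)) / -(ρ + 1)⁻¹ := by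
    intro x
    rw [div_div, mul_comm]
  have := (lim_main hρ hX hm hpos hrv).div_const (-(ρ + 1)⁻¹)
  rw [div_self hc] at this
  exact this.congr (fun x => (heq x).symm)

lemma lim_ii {ρ X : ℝ} {G : ℝ → ℝ} (hρ : ρ < -1) (hX : 0 < X)
    (hm : Measurable G)
    (hpos : ∀ x, X ≤ x → 0 < G x)
    (hrv : ∀ t : ℝ, 0 < t → Tendsto (fun x => G (t * x) / G x) atTop (𝓝 (t ^ ρ)))
    {t : ℝ} (ht : 0 < t) :
    Tendsto (fun x => (∫ u in Ioi (t * x), G u) / ∫ u in Ioi x, G u) atTop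
      (𝓝 (t ^ (ρ + 1))) := by
  set c : ℝ := -(ρ + 1)⁻¹ with hc
  have hcpos := c_pos hρ
  obtain ⟨Y, hYX, hYint⟩ := integrable_tail hρ hX hm hpos hrv
  set J : ℝ → ℝ := fun x => (∫ u in Ioi x, G u) / (x * G x) with hJ
  have hJt : Tendsto J atTop (𝓝 c) := lim_main hρ hX hm hpos hrv
  have htx : Tendsto (fun x : ℝ => t * x) atTop atTop :=
    Tendsto.const_mul_atTop ht tendsto_id
  have h1 : Tendsto (fun x => J (t * x)) atTop (𝓝 c) := hJt.comp htx
  have h2 : Tendsto (fun x => t * (G (t * x) / G x)) atTop (𝓝 (t * t ^ ρ)) :=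
    (hrv t ht).const_mul t
  have h3 : Tendsto (fun x => (J x)⁻¹) atTop (𝓝 c⁻¹) := hJt.inv₀ hcpos.ne'
  have hprod := (h1.mul h2).mul h3
  have hval : c * (t * t ^ ρ) * c⁻¹ = t ^ (ρ + 1) := by
    rw [Real.rpow_add_one ht.ne']
    field_simp
    ring
    exact mul_inv_cancel₀ hcpos.ne'
  rw [hval] at hprod
  refine hprod.congr' ?_
  filter_upwards [eventually_ge_atTop (max Y (Y / t)), eventually_gt_atTop 0]
    with x hx hx0
  have hxY : Y ≤ x := le_trans (le_max_left _ _) hx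
  have htxY : Y ≤ t * x := by
    have : Y / t ≤ x := le_trans (le_max_right _ _) hx
    rw [div_le_iff₀ ht] at this
    linarith
  have hxX : X ≤ x := le_trans hYX hxY
  have htxX : X ≤ t * x := le_trans hYX htxY
  have hGx : 0 < G x := hpos x hxX
  have hGtx : 0 < G (t * x) := hpos _ htxX
  have hIx : 0 < ∫ u in Ioi x, G u := tail_pos hρ hX hpos hxX (hYint x hxY)
  have hItx : 0 < ∫ u in Ioi (t * x), G u :=
    tail_pos hρ hX hpos htxX (hYint _ htxY)
  have htxpos : 0 < t * x := mul_pos ht hx0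
  rw [hJ]
  field_simp

/-- ratio bracket on unit steps -/
lemma step_bracket {ρ X : ℝ} {G : ℝ → ℝ} (hX : 0 < X)
    (hm : Measurable G)
    (hpos : ∀ x, X ≤ x → 0 < G x)
    (hrv : ∀ t : ℝ, 0 < t → Tendsto (fun x => G (t * x) / G x) atTop (𝓝 (t ^ ρ)))
    {ε : ℝ} (hε : 0 < ε) :
    ∀ᶠ y in atTop, ∀ s ∈ Icc (0:ℝ) 1,
      (1 - ε) * G y ≤ G (y + s) ∧ G (y + s) ≤ (1 + ε) * G y := by
  set ε' : ℝ := Real.log (1 + ε) / 2 with hε'def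
  have h1ε : (1:ℝ) < 1 + ε := by linarith
  have hε' : 0 < ε' := by
    rw [hε'def]
    have := Real.log_pos h1ε
    linarith
  filter_upwards [uct hX hm hpos hrv hε', eventually_ge_atTop (max X 1),
    eventually_ge_atTop (|ρ| / ε')] with y hy hy1 hyρ
  intro s hs
  have hyX : X ≤ y := le_trans (le_max_left _ _) hy1
  have hy1' : (1:ℝ) ≤ y := le_trans (le_max_right _ _) hy1
  have hypos : 0 < y := lt_of_lt_of_le one_pos hy1'
  set s' : ℝ := Real.log (1 + s / y) with hs'def
  have hsy0 : 0 ≤ s / y := div_nonneg hs.1 hypos.le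
  have hsy1 : s / y ≤ 1 := by
    rw [div_le_one hypos]
    linarith [hs.2]
  have h1sy : (1:ℝ) ≤ 1 + s / y := by linarith
  have hs'0 : 0 ≤ s' := Real.log_nonneg h1sy
  have hs'1 : s' ≤ 1 := by
    have := Real.log_le_sub_one_of_pos (by linarith : (0:ℝ) < 1 + s / y)
    linarith
  have hexp : y * Real.exp s' = y + s := by
    rw [hs'def, Real.exp_log (by linarith : (0:ℝ) < 1 + s / y)]
    field_simp
  have hA := hy s' ⟨hs'0, hs'1⟩
  rw [A, hexp] at hA
  have hρs' : |ρ * s'| ≤ ε' := by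
    rw [abs_mul]
    have hs'le : s' ≤ s / y := by
      have := Real.log_le_sub_one_of_pos (by linarith : (0:ℝ) < 1 + s / y)
      linarith
    have h2 : |s'| ≤ 1 / y * 1 := by
      rw [abs_of_nonneg hs'0]
      calc s' ≤ s / y := hs'le
        _ ≤ 1 / y := by
            gcongr
            exact hs.2
        _ = 1 / y * 1 := by ring
    have h3 : |ρ| / ε' ≤ y := hyρ
    have h4 : |ρ| ≤ ε' * y := by
      rw [div_le_iff₀ hε'] at h3
      linarith
    calc |ρ| * |s'| ≤ (ε' * y) * (1 / y * 1) := by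
          apply mul_le_mul h4 h2 (abs_nonneg _) (by positivity)
      _ = ε' := by field_simp
  have hGy := hpos y hyX
  have hGys := hpos (y + s) (by linarith [hs.1])
  have hlog : |Real.log (G (y + s)) - Real.log (G y)| ≤ 2 * ε' := by
    have h5 := abs_le.1 hA.le
    have h6 := abs_le.1 hρs'
    rw [abs_le]
    constructor <;> [linarith [h5.1, h6.1]; linarith [h5.2, h6.2]]
  have hloge : 2 * ε' = Real.log (1 + ε) := by rw [hε'def]; ring
  rw [hloge] at hlog
  have hlog' := abs_le.1 hlog
  have hratio : G (y + s) / G y = Real.exp (Real.log (G (y + s)) - Real.log (G y)) := by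
    rw [Real.exp_sub, Real.exp_log hGys, Real.exp_log hGy]
  constructor
  · -- lower bound
    have hlb : Real.exp (-(Real.log (1 + ε))) ≤ G (y + s) / G y := by
      rw [hratio]
      exact Real.exp_le_exp.2 hlog'.1
    have hinv : Real.exp (-(Real.log (1 + ε))) = (1 + ε)⁻¹ := by
      rw [Real.exp_neg, Real.exp_log (by linarith : (0:ℝ) < 1 + ε)]
    rw [hinv] at hlb
    have h7 : (1 - ε) ≤ (1 + ε)⁻¹ := by
      have hc := mul_inv_cancel₀ (show (1:ℝ) + ε ≠ 0 by linarith)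
      nlinarith [sq_nonneg ε, inv_pos.2 (show (0:ℝ) < 1 + ε by linarith)]
    have h8 : (1 + ε)⁻¹ * G y ≤ G (y + s) := (le_div_iff₀ hGy).1 hlb
    calc (1 - ε) * G y ≤ (1 + ε)⁻¹ * G y :=
          mul_le_mul_of_nonneg_right h7 hGy.le
      _ ≤ G (y + s) := h8
  · have hub : G (y + s) / G y ≤ 1 + ε := by
      rw [hratio]
      calc Real.exp (Real.log (G (y + s)) - Real.log (G y))
          ≤ Real.exp (Real.log (1 + ε)) := Real.exp_le_exp.2 hlog'.2
        _ = 1 + ε := Real.exp_log (by linarith)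
    rw [div_le_iff₀ hGy] at hub
    linarith [hub]

lemma iUnion_Ioc (y : ℝ) : (⋃ j : ℕ, Ioc (y + j) (y + j + 1)) = Ioi y := by
  ext u
  simp only [mem_iUnion, mem_Ioc, mem_Ioi]
  constructor
  · rintro ⟨j, h1, h2⟩
    have : (0:ℝ) ≤ j := Nat.cast_nonneg j
    linarith
  · intro hu
    set n : ℕ := ⌈u - y⌉₊ with hn
    have hn1 : 1 ≤ n := by
      rw [hn, Nat.one_le_ceil_iff]
      linarith
    refine ⟨n - 1, ?_, ?_⟩
    · have : ((n - 1 : ℕ) : ℝ) < u - y := by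
        rw [← Nat.lt_ceil]
        omega
      linarith
    · have h2 : u - y ≤ n := Nat.le_ceil _
      have h3 : ((n - 1 : ℕ) : ℝ) + 1 = (n : ℝ) := by
        have : (1:ℕ) ≤ n := hn1
        push_cast [Nat.cast_sub this]
        ring
      linarith [h3]

lemma pairwise_Ioc (y : ℝ) :
    Pairwise (Function.onFun Disjoint fun j : ℕ => Ioc (y + j) (y + j + 1)) := by
  intro i j hij
  rw [Function.onFun, Set.Ioc_disjoint_Ioc]
  rcases lt_or_gt_of_ne hij with h | h
  · have : (i:ℝ) + 1 ≤ j := by exact_mod_cast h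
    calc min (y + i + 1) (y + j + 1) ≤ y + i + 1 := min_le_left _ _
      _ ≤ y + j := by linarith
      _ ≤ max (y + i) (y + j) := le_max_right _ _
  · have : (j:ℝ) + 1 ≤ i := by exact_mod_cast h
    calc min (y + i + 1) (y + j + 1) ≤ y + j + 1 := min_le_right _ _
      _ ≤ y + i := by linarith
      _ ≤ max (y + i) (y + j) := le_max_left _ _

lemma hasSum_Ioc {G : ℝ → ℝ} {y : ℝ} (hint : IntegrableOn G (Ioi y) volume) :
    HasSum (fun j : ℕ => ∫ u in Ioc (y + j) (y + j + 1), G u) (∫ u in Ioi y, G u) := by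
  have h := MeasureTheory.hasSum_integral_iUnion
    (f := G) (μ := volume) (s := fun j : ℕ => Ioc (y + j) (y + j + 1))
    (fun j => measurableSet_Ioc) (pairwise_Ioc y) (by rwa [iUnion_Ioc])
  rwa [iUnion_Ioc] at h

lemma integral_Ioc_bracket {ρ X : ℝ} {G : ℝ → ℝ} (hρ : ρ < -1) (hX : 0 < X)
    (hm : Measurable G)
    (hpos : ∀ x, X ≤ x → 0 < G x)
    (hrv : ∀ t : ℝ, 0 < t → Tendsto (fun x => G (t * x) / G x) atTop (𝓝 (t ^ ρ)))
    {ε : ℝ} (hε : 0 < ε) :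
    ∀ᶠ y in atTop, IntegrableOn G (Ioi y) volume ∧
      (1 - ε) * G y ≤ (∫ u in Ioc y (y + 1), G u) ∧
      (∫ u in Ioc y (y + 1), G u) ≤ (1 + ε) * G y := by
  obtain ⟨Y, hYX, hYint⟩ := integrable_tail hρ hX hm hpos hrv
  filter_upwards [step_bracket hX hm hpos hrv hε, eventually_ge_atTop Y]
    with y hy hyY
  have hint : IntegrableOn G (Ioi y) volume := hYint y hyY
  have hintIoc : IntegrableOn G (Ioc y (y + 1)) volume :=
    hint.mono_set Ioc_subset_Ioi_self
  have hconst : ∀ c : ℝ, ∫ _ in Ioc y (y + 1), c = c := by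
    intro c
    rw [MeasureTheory.setIntegral_const, measureReal_def, Real.volume_Ioc]
    norm_num
  have hintc : ∀ c : ℝ, IntegrableOn (fun _ => c) (Ioc y (y + 1)) volume := by
    intro c
    exact MeasureTheory.integrableOn_const
      (by rw [Real.volume_Ioc]; exact ENNReal.ofReal_ne_top)
  refine ⟨hint, ?_, ?_⟩
  · rw [← hconst ((1 - ε) * G y)]
    apply MeasureTheory.setIntegral_mono_on (hintc _) hintIoc measurableSet_Ioc
    intro u hu
    have h := (hy (u - y) ⟨by linarith [hu.1], by linarith [hu.2]⟩).1
    rwa [show y + (u - y) = u by ring] at h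
  · rw [← hconst ((1 + ε) * G y)]
    apply MeasureTheory.setIntegral_mono_on hintIoc (hintc _) measurableSet_Ioc
    intro u hu
    have h := (hy (u - y) ⟨by linarith [hu.1], by linarith [hu.2]⟩).2
    rwa [show y + (u - y) = u by ring] at h

lemma sum_vs_int {ρ X : ℝ} {G : ℝ → ℝ} (hρ : ρ < -1) (hX : 0 < X)
    (hm : Measurable G)
    (hpos : ∀ x, X ≤ x → 0 < G x)
    (hrv : ∀ t : ℝ, 0 < t → Tendsto (fun x => G (t * x) / G x) atTop (𝓝 (t ^ ρ)))
    {ε : ℝ} (hε : 0 < ε) (hε1 : ε < 1) :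
    ∀ᶠ k : ℕ in atTop, Summable (fun j : ℕ => G ((k : ℝ) + j)) ∧
      (1 - ε) * (∑' j : ℕ, G ((k : ℝ) + j)) ≤ (∫ u in Ioi (k : ℝ), G u) ∧
      (∫ u in Ioi (k : ℝ), G u) ≤ (1 + ε) * (∑' j : ℕ, G ((k : ℝ) + j)) := by
  obtain ⟨Y₁, hY₁⟩ := (integral_Ioc_bracket hρ hX hm hpos hrv hε).exists_forall_of_atTop
  have hcast : Tendsto (fun k : ℕ => (k : ℝ)) atTop atTop :=
    tendsto_natCast_atTop_atTop
  filter_upwards [hcast.eventually_ge_atTop (max Y₁ X)] with k hk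
  have hkY : Y₁ ≤ (k : ℝ) := le_trans (le_max_left _ _) hk
  have hkX : X ≤ (k : ℝ) := le_trans (le_max_right _ _) hk
  set b : ℕ → ℝ := fun j => ∫ u in Ioc ((k : ℝ) + j) ((k : ℝ) + j + 1), G u with hb
  have hbr : ∀ j : ℕ, (1 - ε) * G ((k : ℝ) + j) ≤ b j ∧
      b j ≤ (1 + ε) * G ((k : ℝ) + j) := by
    intro j
    have hkj : Y₁ ≤ (k : ℝ) + j := by
      have : (0:ℝ) ≤ j := Nat.cast_nonneg j
      linarith
    exact ⟨(hY₁ _ hkj).2.1, (hY₁ _ hkj).2.2⟩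
  have hint : IntegrableOn G (Ioi (k : ℝ)) volume := (hY₁ _ hkY).1
  have hhs : HasSum b (∫ u in Ioi (k : ℝ), G u) := hasSum_Ioc hint
  have hbsum : Summable b := hhs.summable
  have hGnn : ∀ j : ℕ, 0 ≤ G ((k : ℝ) + j) := by
    intro j
    have : X ≤ (k : ℝ) + j := by
      have : (0:ℝ) ≤ j := Nat.cast_nonneg j
      linarith
    exact (hpos _ this).le
  have hGle : ∀ j : ℕ, G ((k : ℝ) + j) ≤ (1 - ε)⁻¹ * b j := by
    intro j
    have h := (hbr j).1
    have h1ε : (0:ℝ) < 1 - ε := by linarith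
    have h2 := mul_le_mul_of_nonneg_left h (inv_nonneg.2 h1ε.le)
    rwa [inv_mul_cancel_left₀ h1ε.ne'] at h2
  have hSsum : Summable (fun j : ℕ => G ((k : ℝ) + j)) :=
    Summable.of_nonneg_of_le hGnn hGle (hbsum.mul_left _)
  refine ⟨hSsum, ?_, ?_⟩
  · rw [← hhs.tsum_eq, ← tsum_mul_left]
    exact Summable.tsum_le_tsum (fun j => (hbr j).1) (hSsum.mul_left _) hbsum
  · rw [← hhs.tsum_eq, ← tsum_mul_left]
    exact Summable.tsum_le_tsum (fun j => (hbr j).2) hbsum (hSsum.mul_left _)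

lemma lim_iii {ρ X : ℝ} {G : ℝ → ℝ} (hρ : ρ < -1) (hX : 0 < X)
    (hm : Measurable G)
    (hpos : ∀ x, X ≤ x → 0 < G x)
    (hrv : ∀ t : ℝ, 0 < t → Tendsto (fun x => G (t * x) / G x) atTop (𝓝 (t ^ ρ))) :
    Tendsto (fun k : ℕ =>
      (∑' j : ℕ, G ((k : ℝ) + (j : ℝ))) / (-(ρ + 1)⁻¹ * ((k : ℝ) * G (k : ℝ))))
      atTop (𝓝 1) := by
  have hcast : Tendsto (fun k : ℕ => (k : ℝ)) atTop atTop :=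
    tendsto_natCast_atTop_atTop
  set S : ℕ → ℝ := fun k => ∑' j : ℕ, G ((k : ℝ) + j) with hS
  set I : ℕ → ℝ := fun k => ∫ u in Ioi (k : ℝ), G u with hI
  obtain ⟨Y, hYX, hYint⟩ := integrable_tail hρ hX hm hpos hrv
  have hIpos : ∀ᶠ k : ℕ in atTop, 0 < I k := by
    filter_upwards [hcast.eventually_ge_atTop Y] with k hk
    exact tail_pos hρ hX hpos (le_trans hYX hk) (hYint _ hk)
  have hSpos : ∀ᶠ k : ℕ in atTop, 0 < S k := by
    filter_upwards [sum_vs_int hρ hX hm hpos hrv one_half_pos (by norm_num),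
      hcast.eventually_ge_atTop X] with k hk hkX
    have hGnn : ∀ j : ℕ, 0 ≤ G ((k : ℝ) + j) := by
      intro j
      have : X ≤ (k : ℝ) + j := by
        have : (0:ℝ) ≤ j := Nat.cast_nonneg j
        linarith
      exact (hpos _ this).le
    have h0 : 0 < G ((k : ℝ) + (0 : ℕ)) := by
      simpa using hpos (k : ℝ) hkX
    exact Summable.tsum_pos hk.1 hGnn 0 h0
  -- I/S → 1
  have hR : Tendsto (fun k => I k / S k) atTop (𝓝 1) := by
    rw [Metric.tendsto_atTop]
    intro δ hδ
    set ε : ℝ := min (δ / 2) (1 / 2) with hε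
    have hεpos : 0 < ε := lt_min (by linarith) one_half_pos
    have hε1 : ε < 1 := lt_of_le_of_lt (min_le_right _ _) (by norm_num)
    have hevent := (sum_vs_int hρ hX hm hpos hrv hεpos hε1).and
      (hIpos.and hSpos)
    obtain ⟨N, hN⟩ := hevent.exists_forall_of_atTop
    refine ⟨N, fun k hk => ?_⟩
    obtain ⟨⟨hsum, hl, hu⟩, hIk, hSk⟩ := hN k hk
    have h1 : 1 - ε ≤ I k / S k := by
      rw [le_div_iff₀ hSk]
      exact hl
    have h2 : I k / S k ≤ 1 + ε := by
      rw [div_le_iff₀ hSk]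
      exact hu
    rw [Real.dist_eq, abs_sub_lt_iff]
    have hεδ : ε ≤ δ / 2 := min_le_left _ _
    constructor <;> linarith
  have hQ : Tendsto (fun k => S k / I k) atTop (𝓝 1) := by
    have := hR.inv₀ one_ne_zero
    rw [inv_one] at this
    refine this.congr fun k => ?_
    rw [inv_div]
  have hI2 : Tendsto (fun k : ℕ => I k / (-(ρ + 1)⁻¹ * ((k : ℝ) * G (k : ℝ))))
      atTop (𝓝 1) := (lim_i hρ hX hm hpos hrv).comp hcast
  have hprod := hQ.mul hI2
  rw [mul_one] at hprod
  refine hprod.congr' ?_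
  filter_upwards [hIpos] with k hIk
  rw [div_mul_div_comm, mul_comm (S k) (I k), mul_div_mul_left _ _ hIk.ne']

end Karamata8

open Karamata8 in
/-- Karamata's theorem (direct half) for a function `g : [X,∞) → (0,∞)` regularly
varying at `∞` of index `ρ < -1` and locally bounded on `[X,∞)`:
(i)  `∫_x^∞ g ~ -(ρ+1)⁻¹ · x·g(x)` as `x → ∞`;
(ii) `(∫_{tx}^∞ g) / (∫_x^∞ g) → t^{ρ+1}` as `x → ∞` for every `t > 0`;
(iii) `∑_{j=k}^∞ g(j) ~ -(ρ+1)⁻¹ · k·g(k)` as `k → ∞` through the integers. -/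
theorem statement8 (ρ : ℝ) (hρ : ρ < -1) (X : ℝ) (hX : 0 < X) (g : ℝ → ℝ)
    (hgpos : ∀ x, X ≤ x → 0 < g x)
    (hgmeas : Measurable fun x : Set.Ici X => g x)
    (hgrv : ∀ t : ℝ, 0 < t → Tendsto (fun x => g (t * x) / g x) atTop (𝓝 (t ^ ρ)))
    (hloc : ∀ b : ℝ, ∃ C : ℝ, ∀ x ∈ Set.Icc X b, g x ≤ C) :
    Tendsto (fun x => (∫ u in Set.Ioi x, g u) / (-(ρ + 1)⁻¹ * (x * g x))) atTop (𝓝 1) ∧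
    (∀ t : ℝ, 0 < t →
      Tendsto (fun x => (∫ u in Set.Ioi (t * x), g u) / ∫ u in Set.Ioi x, g u) atTop
        (𝓝 (t ^ (ρ + 1)))) ∧
    Tendsto
      (fun k : ℕ => (∑' j : ℕ, g ((k : ℝ) + (j : ℝ))) / (-(ρ + 1)⁻¹ * ((k : ℝ) * g (k : ℝ))))
      atTop (𝓝 1) := by
  classical
  -- measurable extension of `g`
  have hemb : MeasurableEmbedding ((↑) : Set.Ici X → ℝ) :=
    MeasurableEmbedding.subtype_coe measurableSet_Ici
  set G : ℝ → ℝ :=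
    Function.extend ((↑) : Set.Ici X → ℝ) (fun x : Set.Ici X => g x) (fun _ => 0)
    with hGdef
  have hGm : Measurable G := hemb.measurable_extend hgmeas measurable_const
  have hGeq : ∀ x : ℝ, X ≤ x → G x = g x := by
    intro x hx
    have : x = ((⟨x, hx⟩ : Set.Ici X) : ℝ) := rfl
    rw [hGdef, this, Subtype.coe_injective.extend_apply]
  have hpos : ∀ x, X ≤ x → 0 < G x := by
    intro x hx
    rw [hGeq x hx]
    exact hgpos x hx
  have hrv : ∀ t : ℝ, 0 < t → Tendsto (fun x => G (t * x) / G x) atTop (𝓝 (t ^ ρ)) := by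
    intro t ht
    refine (hgrv t ht).congr' ?_
    filter_upwards [eventually_ge_atTop X, eventually_ge_atTop (X / t)] with x hx hxt
    have htx : X ≤ t * x := by
      rw [div_le_iff₀ ht] at hxt
      linarith [mul_comm x t]
    rw [hGeq x hx, hGeq _ htx]
  -- transfer of integrals
  have hIeq : ∀ x : ℝ, X ≤ x → (∫ u in Set.Ioi x, G u) = ∫ u in Set.Ioi x, g u := by
    intro x hx
    apply MeasureTheory.setIntegral_congr_fun measurableSet_Ioi
    intro u hu
    exact hGeq u (le_trans hx (le_of_lt hu))
  refine ⟨?_, ?_, ?_⟩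
  · refine (lim_i hρ hX hGm hpos hrv).congr' ?_
    filter_upwards [eventually_ge_atTop X] with x hx
    rw [hIeq x hx, hGeq x hx]
  · intro t ht
    refine (lim_ii hρ hX hGm hpos hrv ht).congr' ?_
    filter_upwards [eventually_ge_atTop X, eventually_ge_atTop (X / t)] with x hx hxt
    have htx : X ≤ t * x := by
      rw [div_le_iff₀ ht] at hxt
      linarith [mul_comm x t]
    rw [hIeq x hx, hIeq _ htx]
  · refine (lim_iii hρ hX hGm hpos hrv).congr' ?_
    have hcast : Tendsto (fun k : ℕ => (k : ℝ)) atTop atTop :=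
      tendsto_natCast_atTop_atTop
    filter_upwards [hcast.eventually_ge_atTop X] with k hk
    have hsum : (∑' j : ℕ, G ((k : ℝ) + j)) = ∑' j : ℕ, g ((k : ℝ) + j) := by
      apply tsum_congr
      intro j
      have : X ≤ (k : ℝ) + j := by
        have : (0:ℝ) ≤ j := Nat.cast_nonneg j
        linarith
      rw [hGeq _ this]
    rw [hsum, hGeq _ hk]
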